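/- Let A be a C*-algebra, J a closed two-sided ideal of A invariant under a flow α, and Q : A → A/J the quotient map with induced flow α̇ on A/J with generator δ̇. Let δ be the generator of α on A. Then Q maps D(δ) onto D(δ̇); indeed (1 + δ)^{−1} ∘ Q = Q ∘ (1 + δ)^{−1} (where (1+δ)^{−1} denotes the resolvent of the generator), and consequently every h = h* ∈ D(δ̇) admits a self-adjoint lift b ∈ D(δ) with Q(b) = h. -/

import Mathlib

open MeasureTheory

open MeasureTheory Set Filter

section Aux

variable {C : Type*} [CStarAlgebra C]

/-- A star-algebra automorphism as a continuous linear map. -/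
noncomputable def flowCLM (e : C ≃⋆ₐ[ℂ] C) : C →L[ℂ] C :=
  { toFun := e
    map_add' := map_add e
    map_smul' := map_smul e
    cont := (StarAlgEquiv.isometry e).continuous }

lemma flowCLM_apply (e : C ≃⋆ₐ[ℂ] C) (x : C) : flowCLM e x = e x := rfl

variable (β : ℝ → C ≃⋆ₐ[ℂ] C)

lemma flow_integrable (hcont : ∀ x : C, Continuous fun t : ℝ => β t x) (x : C) (a : ℝ) :
    IntegrableOn (fun s : ℝ => Real.exp (-s) • β s x) (Ioi a) := by
  have hmajor : IntegrableOn (fun s : ℝ => Real.exp (-s) * ‖x‖) (Ioi a) := by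
    have := (exp_neg_integrableOn_Ioi a (one_pos)).mul_const ‖x‖
    unfold IntegrableOn
    simpa using this
  refine Integrable.mono' hmajor ?_ ?_
  · exact ((Real.continuous_exp.comp continuous_neg).smul (hcont x)).aestronglyMeasurable
  · filter_upwards with s
    rw [norm_smul, Real.norm_eq_abs, abs_of_pos (Real.exp_pos _), StarAlgEquiv.norm_map]

end Aux

section Aux2

variable {C : Type*} [CStarAlgebra C] (β : ℝ → C ≃⋆ₐ[ℂ] C)
  (hgroup : ∀ s t : ℝ, ∀ x : C, β (s + t) x = β s (β t x))

include hgroup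

lemma flow_zero (x : C) : β 0 x = x := by
  have h := hgroup 0 0 x
  simp only [add_zero] at h
  exact ((β 0).injective h.symm)

lemma flow_hasDerivAt {x y : C} (h0 : HasDerivAt (fun t : ℝ => β t x) y 0) (s : ℝ) :
    HasDerivAt (fun t : ℝ => β t x) (β s y) s := by
  have hcomp : HasDerivAt (fun t : ℝ => β (t - s) x) ((1 : ℝ) • y) s := by
    have hsub : HasDerivAt (fun t : ℝ => t - s) (1 : ℝ) s := (hasDerivAt_id s).sub_const s
    have := HasDerivAt.scomp_of_eq (x := s) h0 hsub (by rw [sub_self])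
    exact this
  have h2 := (((flowCLM (β s)).restrictScalars ℝ).hasFDerivAt.comp_hasDerivAt s hcomp)
  simp only [one_smul, ContinuousLinearMap.coe_restrictScalars'] at h2
  have heq : (fun t : ℝ => β t x) = fun t : ℝ => flowCLM (β s) (β (t - s) x) := by
    funext t
    show β t x = β s (β (t - s) x)
    rw [← hgroup s (t - s) x, add_sub_cancel]
  rw [heq]
  exact h2

end Aux2

lemma shift_integral {E : Type*} [NormedAddCommGroup E] [NormedSpace ℝ E] (f : ℝ → E) (t : ℝ) :
    ∫ u in Ioi t, f u = ∫ s in Ioi (0:ℝ), f (s + t) := by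
  rw [← integral_indicator measurableSet_Ioi, ← integral_indicator measurableSet_Ioi,
    ← integral_add_right_eq_self (fun u => (Ioi t).indicator f u) t]
  congr 1
  funext s
  by_cases h : (0:ℝ) < s <;>
    simp [Set.indicator_apply, h, lt_add_iff_pos_left]

section Aux3

variable {C : Type*} [CStarAlgebra C] (β : ℝ → C ≃⋆ₐ[ℂ] C)
  (hgroup : ∀ s t : ℝ, ∀ x : C, β (s + t) x = β s (β t x))
  (hcont : ∀ x : C, Continuous fun t : ℝ => β t x)

include hgroup hcont

lemma flow_laplace_hasDerivAt (x : C) :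
    HasDerivAt (fun t : ℝ => β t (∫ s in Ioi (0:ℝ), Real.exp (-s) • β s x))
      ((∫ s in Ioi (0:ℝ), Real.exp (-s) • β s x) - x) 0 := by
  set f : ℝ → C := fun s => Real.exp (-s) • β s x with hf
  set R : C := ∫ s in Ioi (0:ℝ), f s with hR
  set g : ℝ → C := fun t => ∫ u in Ioi t, f u with hgdef
  have hfc : Continuous f := (Real.continuous_exp.comp continuous_neg).smul (hcont x)
  have key : ∀ t : ℝ, β t R = Real.exp t • g t := by
    intro t
    have h1 : β t R = ∫ s in Ioi (0:ℝ), β t (f s) :=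
      (ContinuousLinearMap.integral_comp_comm (flowCLM (β t))
        (flow_integrable β hcont x 0)).symm
    have h2 : ∀ s : ℝ, β t (f s) = Real.exp t • f (s + t) := by
      intro s
      show flowCLM (β t) (Real.exp (-s) • β s x) = _
      rw [(flowCLM (β t)).map_smul_of_tower]
      show Real.exp (-s) • β t (β s x) = _
      rw [← hgroup t s x, hf]
      simp only [smul_smul]
      rw [add_comm s t]
      congr 1
      rw [← Real.exp_add]
      ring_nf
    rw [h1, hgdef]
    simp only [h2]
    rw [shift_integral f t, integral_smul]
  have hgsplit : ∀ t : ℝ, g t = R - ∫ u in (0:ℝ)..t, f u := by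
    intro t
    rcases le_or_gt 0 t with ht | ht
    · have hsplit : (∫ u in Ioc (0:ℝ) t, f u) + ∫ u in Ioi t, f u = R := by
        rw [hR, ← Set.Ioc_union_Ioi_eq_Ioi ht]
        rw [setIntegral_union (Set.Ioc_disjoint_Ioi le_rfl) measurableSet_Ioi
          ((flow_integrable β hcont x 0).mono_set Set.Ioc_subset_Ioi_self)
          (flow_integrable β hcont x t)]
      rw [intervalIntegral.integral_of_le ht]
      rw [← hsplit]; abel
    · have hsplit : (∫ u in Ioc t 0, f u) + ∫ u in Ioi (0:ℝ), f u = g t := by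
        show _ = ∫ u in Ioi t, f u
        rw [← Set.Ioc_union_Ioi_eq_Ioi ht.le]
        rw [setIntegral_union (Set.Ioc_disjoint_Ioi le_rfl) measurableSet_Ioi
          ((flow_integrable β hcont x t).mono_set Set.Ioc_subset_Ioi_self)
          (flow_integrable β hcont x 0)]
      rw [intervalIntegral.integral_symm, intervalIntegral.integral_of_le ht.le]
      rw [← hsplit, ← hR]; abel
  have hF : HasDerivAt (fun t : ℝ => ∫ u in (0:ℝ)..t, f u) (f 0) 0 := by
    exact intervalIntegral.integral_hasDerivAt_right
      (hfc.intervalIntegrable _ _)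
      (hfc.stronglyMeasurable.stronglyMeasurableAtFilter)
      hfc.continuousAt
  have hg' : HasDerivAt g (-(f 0)) 0 := by
    have := (hasDerivAt_const (0:ℝ) R).sub hF
    simp only [zero_sub] at this
    exact (funext hgsplit : g = _) ▸ this
  have hexp : HasDerivAt Real.exp (Real.exp 0) 0 := Real.hasDerivAt_exp 0
  have hprod := hexp.smul hg'
  have hf0 : f 0 = x := by
    rw [hf]; simp only [neg_zero, Real.exp_zero, one_smul]
    exact flow_zero β hgroup x
  have hg0 : g 0 = R := rfl
  have : HasDerivAt (fun t : ℝ => Real.exp t • g t) (R - x) 0 := by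
    exact hprod.congr_deriv (by
      simp only [Real.exp_zero, one_smul, hf0, hg0]
      abel)
  exact (funext key : (fun t : ℝ => β t R) = _) ▸ this

lemma flow_laplace_inv {h z : C} (h0 : HasDerivAt (fun t : ℝ => β t h) z 0) :
    ∫ s in Ioi (0:ℝ), Real.exp (-s) • β s (h - z) = h := by
  have hderiv : ∀ s ∈ Ici (0:ℝ),
      HasDerivAt (fun u : ℝ => Real.exp (-u) • β u h)
        (-(Real.exp (-s) • β s (h - z))) s := by
    intro s _
    have h1 : HasDerivAt (fun u : ℝ => Real.exp (-u)) (-Real.exp (-s)) s := by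
      have h1' := (Real.hasDerivAt_exp (-s)).comp s ((hasDerivAt_id s).neg)
      simp only [Function.comp_def, id_eq, mul_neg_one] at h1'
      exact h1'
    have h2 := flow_hasDerivAt β hgroup h0 s
    have := h1.smul h2
    exact this.congr_deriv (by
      rw [map_sub, smul_sub, neg_sub, neg_smul]
      abel)
  have htend : Tendsto (fun u : ℝ => Real.exp (-u) • β u h) atTop (nhds 0) := by
    apply squeeze_zero_norm (a := fun u : ℝ => Real.exp (-u) * ‖h‖)
    · intro u
      rw [norm_smul, Real.norm_eq_abs, abs_of_pos (Real.exp_pos _), StarAlgEquiv.norm_map]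
    · have : Tendsto (fun u : ℝ => Real.exp (-u)) atTop (nhds 0) := by
        simpa using Real.tendsto_exp_neg_atTop_nhds_zero
      simpa using this.mul_const ‖h‖
  have hint : IntegrableOn (fun s : ℝ => -(Real.exp (-s) • β s (h - z))) (Ioi 0) :=
    (flow_integrable β hcont (h - z) 0).neg
  have hmain := integral_Ioi_of_hasDerivAt_of_tendsto' hderiv hint htend
  rw [integral_neg] at hmain
  have hval : Real.exp (-(0:ℝ)) • β 0 h = h := by
    simp only [neg_zero, Real.exp_zero, one_smul]
    exact flow_zero β hgroup h
  rw [hval, zero_sub, neg_inj] at hmain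
  exact hmain

end Aux3
open scoped CStarAlgebra in
/-- Star as a real-continuous-linear map on a C*-algebra. -/
noncomputable def starCLM {C : Type*} [CStarAlgebra C] : C →L[ℝ] C :=
  { toFun := star
    map_add' := star_add
    map_smul' := fun r x => by simp [star_smul]
    cont := continuous_star }


open scoped CStarAlgebra in
/-- Let `J` be a closed α-invariant ideal of a C*-algebra `A`, realized as
the kernel of a surjective *-homomorphism `Q : A → B` intertwining the flow `α` on `A`
with the induced flow `α̇` on the quotient `B`, with generators `δ` and `δ̇`. Then the
resolvent `(1+δ)⁻¹` (given by the Laplace transform `x ↦ ∫₀^∞ e^{−s} α_s(x) ds`) commutes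
with `Q`, `Q(D(δ)) = D(δ̇)`, and every self-adjoint `h ∈ D(δ̇)` lifts to a self-adjoint
`b ∈ D(δ)` with `Q(b) = h`. -/
theorem quotient_generator_lifting
    {A B : Type*} [CStarAlgebra A] [CStarAlgebra B]
    (Q : A →⋆ₐ[ℂ] B) (hQ : Function.Surjective Q)
    (J : Set A) (hJ : J = {x : A | Q x = 0})
    (α : ℝ → A ≃⋆ₐ[ℂ] A) (αq : ℝ → B ≃⋆ₐ[ℂ] B)
    (hgroupA : ∀ s t : ℝ, ∀ x : A, α (s + t) x = α s (α t x))
    (hgroupB : ∀ s t : ℝ, ∀ y : B, αq (s + t) y = αq s (αq t y))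
    (hcontA : ∀ x : A, Continuous fun t : ℝ => α t x)
    (hcontB : ∀ y : B, Continuous fun t : ℝ => αq t y)
    (hJinv : ∀ t : ℝ, ∀ x ∈ J, α t x ∈ J)
    (hint : ∀ (t : ℝ) (x : A), Q (α t x) = αq t (Q x))
    (DδA : Set A) (δA : A → A)
    (hgenA : ∀ x : A, x ∈ DδA ↔ ∃ y : A, HasDerivAt (fun t : ℝ => α t x) y 0)
    (hδA : ∀ x ∈ DδA, HasDerivAt (fun t : ℝ => α t x) (δA x) 0)
    (DδB : Set B) (δB : B → B)
    (hgenB : ∀ y : B, y ∈ DδB ↔ ∃ z : B, HasDerivAt (fun t : ℝ => αq t y) z 0)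
    (hδB : ∀ y ∈ DδB, HasDerivAt (fun t : ℝ => αq t y) (δB y) 0) :
    (∀ x : A, Q (∫ s in Set.Ioi (0:ℝ), Real.exp (-s) • α s x) =
        ∫ s in Set.Ioi (0:ℝ), Real.exp (-s) • αq s (Q x)) ∧
    Q '' DδA = DδB ∧
    ∀ h ∈ DδB, IsSelfAdjoint h →
      ∃ b ∈ DδA, IsSelfAdjoint b ∧ Q b = h := by
  -- Q as a continuous linear map
  have hQcont : Continuous Q := map_continuous Q
  set Qc : A →L[ℂ] B :=
    { toFun := Q
      map_add' := map_add Q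
      map_smul' := map_smul Q
      cont := hQcont } with hQc
  have hQc_apply : ∀ x : A, Qc x = Q x := fun _ => rfl
  -- part 1
  have part1 : ∀ x : A, Q (∫ s in Ioi (0:ℝ), Real.exp (-s) • α s x) =
      ∫ s in Ioi (0:ℝ), Real.exp (-s) • αq s (Q x) := by
    intro x
    have h1 : ∫ s in Ioi (0:ℝ), Qc (Real.exp (-s) • α s x) =
        Qc (∫ s in Ioi (0:ℝ), Real.exp (-s) • α s x) :=
      ContinuousLinearMap.integral_comp_comm Qc (flow_integrable α hcontA x 0)
    rw [← hQc_apply, ← h1]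
    congr 1
    funext s
    rw [Qc.map_smul_of_tower, hQc_apply, hint s x]
  -- forward inclusion
  have fwd : ∀ x ∈ DδA, Q x ∈ DδB := by
    intro x hx
    obtain ⟨y, hy⟩ := (hgenA x).mp hx
    refine (hgenB (Q x)).mpr ⟨Q y, ?_⟩
    have heq : (fun t : ℝ => αq t (Q x)) = fun t : ℝ => (Qc.restrictScalars ℝ) (α t x) := by
      funext t
      rw [ContinuousLinearMap.coe_restrictScalars', hQc_apply, hint t x]
    rw [heq]
    exact (Qc.restrictScalars ℝ).hasFDerivAt.comp_hasDerivAt 0 hy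
  -- backward inclusion
  have bwd : ∀ h ∈ DδB, ∃ b ∈ DδA, Q b = h := by
    intro h hh
    obtain ⟨z, hz⟩ := (hgenB h).mp hh
    obtain ⟨a, ha⟩ := hQ (h - z)
    refine ⟨∫ s in Ioi (0:ℝ), Real.exp (-s) • α s a, ?_, ?_⟩
    · exact (hgenA _).mpr ⟨_, flow_laplace_hasDerivAt α hgroupA hcontA a⟩
    · rw [part1 a, ha]
      exact flow_laplace_inv αq hgroupB hcontB hz
  have part2 : Q '' DδA = DδB := by
    apply Set.eq_of_subset_of_subset
    · rintro _ ⟨x, hx, rfl⟩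
      exact fwd x hx
    · intro h hh
      obtain ⟨b, hb, hQb⟩ := bwd h hh
      exact ⟨b, hb, hQb⟩
  refine ⟨part1, part2, ?_⟩
  -- part 3
  intro h hh hsa
  obtain ⟨b₀, hb₀, hQb₀⟩ := bwd h hh
  obtain ⟨y, hy⟩ := (hgenA b₀).mp hb₀
  -- star b₀ has a derivative
  have hystar : HasDerivAt (fun t : ℝ => α t (star b₀)) (star y) 0 := by
    have heq : (fun t : ℝ => α t (star b₀)) = fun t : ℝ => starCLM (α t b₀) := by
      funext t
      show α t (star b₀) = star (α t b₀)
      exact map_star (α t) b₀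
    rw [heq]
    exact starCLM.hasFDerivAt.comp_hasDerivAt 0 hy
  set b : A := (2⁻¹ : ℂ) • (b₀ + star b₀) with hbdef
  have hbmem : b ∈ DδA := by
    refine (hgenA b).mpr ⟨(2⁻¹ : ℂ) • (y + star y), ?_⟩
    have heq : (fun t : ℝ => α t b) =
        fun t : ℝ => (2⁻¹ : ℂ) • (α t b₀ + α t (star b₀)) := by
      funext t
      rw [hbdef, _root_.map_smul, map_add]
    rw [heq]
    exact (hy.add hystar).const_smul (2⁻¹ : ℂ)
  have hbsa : IsSelfAdjoint b := by
    rw [IsSelfAdjoint, hbdef, star_smul, star_add, star_star]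
    simp only [star_inv₀, star_ofNat]
    rw [add_comm]
  have hQb : Q b = h := by
    rw [hbdef, _root_.map_smul, map_add, map_star, hQb₀, hsa.star_eq, ← two_smul ℂ h,
      smul_smul]
    norm_num
  exact ⟨b, hbmem, hbsa, hQb⟩
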